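/- Even partial-sum identity: for every natural number n, ∑_{k=0}^{2n} [(2n) k] = 2^n · (1 + (2/π)·∑_{k=1}^{n} 2^k/(k·C(2k,k))), where C(2k,k) is the central binomial coefficient. -/

import Mathlib

open scoped Real Classical

/-- The generalized β-binomial coefficient `[n k]_β`:
`Γ(βn+1)/(Γ(βk+1)·Γ(β(n−k)+1))` when `β(n−k)` is not an integer `≤ -1`, else `0`. -/
noncomputable def bbinom (β : ℝ) (n : ℕ) (k : ℤ) : ℝ :=
  if ∃ m : ℤ, m ≤ -1 ∧ β * ((n : ℝ) - (k : ℝ)) = (m : ℝ) then 0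
  else Real.Gamma (β * n + 1) /
    (Real.Gamma (β * k + 1) * Real.Gamma (β * ((n : ℝ) - (k : ℝ)) + 1))

/-- The 1/2-binomial coefficient. -/
noncomputable def bhalf (n : ℕ) (k : ℤ) : ℝ := bbinom (1/2) n k

open Finset Nat

private lemma gamma_nat_add_half (m : ℕ) :
    Real.Gamma ((m : ℝ) + 1/2) = Real.sqrt π * (2*m)! / (4^m * m !) := by
  induction m with
  | zero =>
    rw [show ((0:ℕ):ℝ) + 1/2 = 1/2 by norm_num, Real.Gamma_one_half_eq]
    norm_num [Nat.factorial]
  | succ m ih =>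
    have h : ((m:ℝ) + 1/2) ≠ 0 := by positivity
    have e : ((m+1 : ℕ) : ℝ) + 1/2 = ((m:ℝ) + 1/2) + 1 := by push_cast; ring
    rw [e, Real.Gamma_add_one h, ih]
    have e2 : 2*(m+1) = 2*m+1+1 := by ring
    rw [e2, Nat.factorial_succ, Nat.factorial_succ, Nat.factorial_succ]
    have h1 : ((m ! : ℕ):ℝ) ≠ 0 := Nat.cast_ne_zero.mpr m.factorial_ne_zero
    have h2 : (4:ℝ)^m ≠ 0 := by positivity
    push_cast
    field_simp
    ring

/-- `Ap j m = A(j+m, j)` in the informal notation. -/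
noncomputable def Ap (j m : ℕ) : ℝ :=
  4^(j+m+1) * (j+m)! * (j+1)! * m ! / ((2*j+2)! * (2*m)!)

noncomputable def Gp (j m : ℕ) : ℝ :=
  (-(4:ℝ)) * j * (2*(j:ℝ)+1) * ((j:ℝ)+(m:ℝ)+1) / ((2*(m:ℝ)+1)*(2*(m:ℝ)+3)) * Ap j m

private lemma fs (n : ℕ) : ((n+1)! : ℝ) = ((n:ℝ)+1) * (n ! : ℝ) := by
  rw [Nat.factorial_succ]; push_cast; ring

private lemma cert (j m : ℕ) :
    (2*((j:ℝ)+(m:ℝ)+1)+3) * Ap j (m+3) - (6*((j:ℝ)+(m:ℝ)+1)+8) * Ap j (m+2)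
      + (4*((j:ℝ)+(m:ℝ)+1)+4) * Ap j (m+1) = Gp (j+1) m - Gp j (m+1) := by
  have h1 : ((2*(m+3))! : ℝ)
      = (2*(m:ℝ)+6)*(2*(m:ℝ)+5)*(2*(m:ℝ)+4)*(2*(m:ℝ)+3)*(2*(m:ℝ)+2)*(2*(m:ℝ)+1)*((2*m)! : ℝ) := by
    rw [show 2*(m+3) = 2*m+1+1+1+1+1+1 from by ring, fs, fs, fs, fs, fs, fs]
    push_cast; ring
  have h2 : ((2*(m+2))! : ℝ)
      = (2*(m:ℝ)+4)*(2*(m:ℝ)+3)*(2*(m:ℝ)+2)*(2*(m:ℝ)+1)*((2*m)! : ℝ) := by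
    rw [show 2*(m+2) = 2*m+1+1+1+1 from by ring, fs, fs, fs, fs]
    push_cast; ring
  have h3 : ((2*(m+1))! : ℝ) = (2*(m:ℝ)+2)*(2*(m:ℝ)+1)*((2*m)! : ℝ) := by
    rw [show 2*(m+1) = 2*m+1+1 from by ring, fs, fs]
    push_cast; ring
  have h4 : ((j+(m+3))! : ℝ)
      = ((j:ℝ)+(m:ℝ)+3)*((j:ℝ)+(m:ℝ)+2)*((j:ℝ)+(m:ℝ)+1)*((j+m)! : ℝ) := by
    rw [show j+(m+3) = j+m+1+1+1 from by ring, fs, fs, fs]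
    push_cast; ring
  have h5 : ((j+(m+2))! : ℝ) = ((j:ℝ)+(m:ℝ)+2)*((j:ℝ)+(m:ℝ)+1)*((j+m)! : ℝ) := by
    rw [show j+(m+2) = j+m+1+1 from by ring, fs, fs]
    push_cast; ring
  have h6 : ((j+(m+1))! : ℝ) = ((j:ℝ)+(m:ℝ)+1)*((j+m)! : ℝ) := by
    rw [show j+(m+1) = j+m+1 from by ring, fs]
    push_cast; ring
  have h7 : ((j+1+m)! : ℝ) = ((j:ℝ)+(m:ℝ)+1)*((j+m)! : ℝ) := by
    rw [show j+1+m = j+m+1 from by ring, fs]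
    push_cast; ring
  have h8 : ((j+1+1)! : ℝ) = ((j:ℝ)+2)*((j+1)! : ℝ) := by
    rw [fs]; push_cast; ring
  have h9 : ((2*(j+1)+2)! : ℝ) = (2*(j:ℝ)+4)*(2*(j:ℝ)+3)*((2*j+2)! : ℝ) := by
    rw [show 2*(j+1)+2 = 2*j+2+1+1 from by ring, fs, fs]
    push_cast; ring
  have h10 : ((m+1)! : ℝ) = ((m:ℝ)+1)*(m ! : ℝ) := fs m
  have h11 : ((m+2)! : ℝ) = ((m:ℝ)+2)*((m:ℝ)+1)*(m ! : ℝ) := by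
    rw [show m+2 = m+1+1 from by ring, fs, fs]; push_cast; ring
  have h12 : ((m+3)! : ℝ) = ((m:ℝ)+3)*((m:ℝ)+2)*((m:ℝ)+1)*(m ! : ℝ) := by
    rw [show m+3 = m+1+1+1 from by ring, fs, fs, fs]; push_cast; ring
  have n1 : ((2*j+2)! : ℝ) ≠ 0 := Nat.cast_ne_zero.mpr (Nat.factorial_ne_zero _)
  have n2 : ((2*m)! : ℝ) ≠ 0 := Nat.cast_ne_zero.mpr (Nat.factorial_ne_zero _)
  have n3 : (2*(m:ℝ)+1) ≠ 0 := by positivity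
  have n4 : (2*(m:ℝ)+3) ≠ 0 := by positivity
  have n5 : (2*(m:ℝ)+5) ≠ 0 := by positivity
  simp only [Ap, Gp]
  rw [h1, h2, h3, h4, h5, h6, h7, h8, h9, h10, h11, h12]
  push_cast
  field_simp
  ring

private lemma boundary (n : ℕ) :
    Gp n 0 + (2*(n:ℝ)+3)*(Ap n 2 + Ap (n+1) 1) - (6*(n:ℝ)+8)*(Ap n 1) = 0 := by
  have h1 : ((n+2)! : ℝ) = ((n:ℝ)+2)*((n:ℝ)+1)*(n ! : ℝ) := by
    rw [show n+2 = n+1+1 from by ring, fs, fs]; push_cast; ring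
  have h2 : ((n+1+1)! : ℝ) = ((n:ℝ)+2)*((n:ℝ)+1)*(n ! : ℝ) := by
    rw [fs, fs]; push_cast; ring
  have h3 : ((2*(n+1)+2)! : ℝ) = (2*(n:ℝ)+4)*(2*(n:ℝ)+3)*((2*n+2)! : ℝ) := by
    rw [show 2*(n+1)+2 = 2*n+2+1+1 from by ring, fs, fs]; push_cast; ring
  have h4 : ((n+1)! : ℝ) = ((n:ℝ)+1)*(n ! : ℝ) := fs n
  have h5 : ((n+0)! : ℝ) = (n ! : ℝ) := by norm_num
  have n1 : ((2*n+2)! : ℝ) ≠ 0 := Nat.cast_ne_zero.mpr (Nat.factorial_ne_zero _)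
  have n2 : ((n ! :ℕ) : ℝ) ≠ 0 := Nat.cast_ne_zero.mpr n.factorial_ne_zero
  simp only [Ap, Gp]
  rw [h1, h3, h4, h5]
  norm_num [Nat.factorial]
  push_cast
  field_simp
  ring

private lemma bhalf_even_val (n j : ℕ) (h : j ≤ n) :
    bhalf (2*n) (((2*j : ℕ) : ℤ)) = (n.choose j : ℝ) := by
  simp only [bhalf, bbinom]
  rw [if_neg]
  · have e1 : (1/2 : ℝ) * ((2*n : ℕ) : ℝ) + 1 = (n : ℝ) + 1 := by push_cast; ring
    have e2 : (1/2 : ℝ) * (((2*j : ℕ) : ℤ) : ℝ) + 1 = (j : ℝ) + 1 := by push_cast; ring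
    have e3 : (1/2 : ℝ) * (((2*n : ℕ) : ℝ) - (((2*j : ℕ) : ℤ) : ℝ)) + 1 = ((n - j : ℕ) : ℝ) + 1 := by
      have : ((n - j : ℕ) : ℝ) = (n : ℝ) - (j : ℝ) := by
        push_cast [Nat.cast_sub h]; ring
      rw [this]; push_cast; ring
    rw [e1, e2, e3, Real.Gamma_nat_eq_factorial, Real.Gamma_nat_eq_factorial,
      Real.Gamma_nat_eq_factorial, Nat.cast_choose ℝ h]
  · rintro ⟨m, hm, he⟩
    have hjn : (j : ℝ) ≤ (n : ℝ) := by exact_mod_cast h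
    have hm' : (m : ℝ) ≤ -1 := by exact_mod_cast hm
    push_cast at he
    linarith

private lemma bhalf_odd_val (j m : ℕ) :
    bhalf (2*(j+m+1)) (((2*j+1 : ℕ) : ℤ)) = Ap j (m+1) / π := by
  simp only [bhalf, bbinom]
  rw [if_neg]
  · have e1 : (1/2 : ℝ) * ((2*(j+m+1) : ℕ) : ℝ) + 1 = ((j+m+1 : ℕ) : ℝ) + 1 := by
      push_cast; ring
    have e2 : (1/2 : ℝ) * (((2*j+1 : ℕ) : ℤ) : ℝ) + 1 = ((j+1 : ℕ) : ℝ) + 1/2 := by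
      push_cast; ring
    have e3 : (1/2 : ℝ) * (((2*(j+m+1) : ℕ) : ℝ) - (((2*j+1 : ℕ) : ℤ) : ℝ)) + 1
        = ((m+1 : ℕ) : ℝ) + 1/2 := by push_cast; ring
    rw [e1, e2, e3, Real.Gamma_nat_eq_factorial, gamma_nat_add_half, gamma_nat_add_half]
    simp only [Ap]
    have hπ : Real.sqrt π * Real.sqrt π = π := Real.mul_self_sqrt Real.pi_pos.le
    have n1 : ((2*(j+1))! : ℝ) ≠ 0 := Nat.cast_ne_zero.mpr (Nat.factorial_ne_zero _)
    have n2 : ((2*(m+1))! : ℝ) ≠ 0 := Nat.cast_ne_zero.mpr (Nat.factorial_ne_zero _)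
    have n3 : ((j+1)! : ℝ) ≠ 0 := Nat.cast_ne_zero.mpr (Nat.factorial_ne_zero _)
    have n4 : ((m+1)! : ℝ) ≠ 0 := Nat.cast_ne_zero.mpr (Nat.factorial_ne_zero _)
    have n5 : (Real.sqrt π) ≠ 0 := by positivity
    have n6 : (π : ℝ) ≠ 0 := Real.pi_ne_zero
    have e4 : 2*j+2 = 2*(j+1) := by ring
    have e5 : 2*(m+1) = 2*m+2 := by ring
    have e6 : j+(m+1) = j+m+1 := by ring
    rw [e4, e6]
    rw [show (4:ℝ)^(j+m+1+1) = 4^(j+1) * 4^(m+1) from by rw [← pow_add]; ring_nf]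
    field_simp
    linear_combination (-1 : ℝ) * hπ
  · rintro ⟨m', hm', he⟩
    have hm'' : (m' : ℝ) ≤ -1 := by exact_mod_cast hm'
    push_cast at he
    linarith

private lemma sum_even_odd (g : ℕ → ℝ) (n : ℕ) :
    ∑ k ∈ Finset.range (2*n+1), g k
      = ∑ j ∈ Finset.range (n+1), g (2*j) + ∑ j ∈ Finset.range n, g (2*j+1) := by
  induction n with
  | zero => simp
  | succ n ih =>
    rw [show 2*(n+1)+1 = (2*n+1)+1+1 from by ring, Finset.sum_range_succ,
      Finset.sum_range_succ, ih, Finset.sum_range_succ (fun j => g (2*j)) (n+1),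
      Finset.sum_range_succ (fun j => g (2*j+1)) n]
    have e1 : 2*(n+1) = 2*n+1+1 := by ring
    rw [e1]
    ring

private noncomputable def S (n : ℕ) : ℝ := ∑ j ∈ Finset.range n, Ap j (n-j)

private lemma S_rec (n : ℕ) :
    (2*(n:ℝ)+3) * S (n+2) - (6*(n:ℝ)+8) * S (n+1) + (4*(n:ℝ)+4) * S n = 0 := by
  have hS2 : S (n+2) = (∑ j ∈ Finset.range n, Ap j (n+2-j)) + Ap n 2 + Ap (n+1) 1 := by
    simp only [S]
    rw [Finset.sum_range_succ, Finset.sum_range_succ,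
      show n+2-(n+1) = 1 from by omega, show n+2-n = 2 from by omega]
  have hS1 : S (n+1) = (∑ j ∈ Finset.range n, Ap j (n+1-j)) + Ap n 1 := by
    simp only [S]
    rw [Finset.sum_range_succ, show n+1-n = 1 from by omega]
  have key : ∀ j ∈ Finset.range n,
      (2*(n:ℝ)+3) * Ap j (n+2-j) - (6*(n:ℝ)+8) * Ap j (n+1-j) + (4*(n:ℝ)+4) * Ap j (n-j)
        = Gp (j+1) (n-(j+1)) - Gp j (n-j) := by
    intro j hj
    have hjn : j < n := Finset.mem_range.mp hj
    obtain ⟨m, hm⟩ : ∃ m, n = j + m + 1 := ⟨n - j - 1, by omega⟩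
    have r1 : n+2-j = m+3 := by omega
    have r2 : n+1-j = m+2 := by omega
    have r3 : n-j = m+1 := by omega
    have r4 : n-(j+1) = m := by omega
    have r5 : (n:ℝ) = (j:ℝ)+(m:ℝ)+1 := by rw [hm]; push_cast; ring
    rw [r1, r2, r3, r4, r5]
    have := cert j m
    linear_combination this
  have tele : ∑ j ∈ Finset.range n, (Gp (j+1) (n-(j+1)) - Gp j (n-j))
      = Gp n (n-n) - Gp 0 (n-0) := Finset.sum_range_sub (fun j => Gp j (n-j)) n
  have hG0 : Gp 0 (n-0) = 0 := by simp [Gp]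
  have hGn : Gp n (n-n) = Gp n 0 := by rw [Nat.sub_self]
  calc (2*(n:ℝ)+3) * S (n+2) - (6*(n:ℝ)+8) * S (n+1) + (4*(n:ℝ)+4) * S n
      = (∑ j ∈ Finset.range n,
          ((2*(n:ℝ)+3) * Ap j (n+2-j) - (6*(n:ℝ)+8) * Ap j (n+1-j) + (4*(n:ℝ)+4) * Ap j (n-j)))
        + ((2*(n:ℝ)+3)*(Ap n 2 + Ap (n+1) 1) - (6*(n:ℝ)+8) * Ap n 1) := by
        have expand : ∑ j ∈ Finset.range n,
            ((2*(n:ℝ)+3) * Ap j (n+2-j) - (6*(n:ℝ)+8) * Ap j (n+1-j) + (4*(n:ℝ)+4) * Ap j (n-j))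
            = (2*(n:ℝ)+3) * (∑ j ∈ Finset.range n, Ap j (n+2-j))
              - (6*(n:ℝ)+8) * (∑ j ∈ Finset.range n, Ap j (n+1-j))
              + (4*(n:ℝ)+4) * S n := by
          rw [Finset.sum_add_distrib, Finset.sum_sub_distrib, ← Finset.mul_sum,
            ← Finset.mul_sum, ← Finset.mul_sum]
          rfl
        rw [hS2, hS1, expand]
        ring
    _ = (Gp n 0 - 0) + ((2*(n:ℝ)+3)*(Ap n 2 + Ap (n+1) 1) - (6*(n:ℝ)+8) * Ap n 1) := by
        rw [Finset.sum_congr rfl key, tele, hG0, hGn]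
    _ = 0 := by
        have := boundary n
        linarith

private noncomputable def T (n : ℕ) : ℝ :=
  2^(n+1) * ∑ k ∈ Finset.Icc 1 n, (2:ℝ)^k / ((k:ℝ) * (Nat.choose (2*k) k : ℝ))

private noncomputable def q (n : ℕ) : ℝ :=
  2^(2*n+3) / (((n:ℝ)+1) * (Nat.choose (2*n+2) (n+1) : ℝ))

private lemma T_step (n : ℕ) : T (n+1) = 2 * T n + q n := by
  simp only [T, q]
  rw [← Finset.Ico_add_one_right_eq_Icc 1 (n+1), show Finset.Ico 1 (n+1+1) = insert (n+1) (Finset.Ico 1 (n+1)) from Nat.Ico_succ_right_eq_insert_Ico (by omega),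
    Finset.sum_insert (by simp), Finset.Ico_add_one_right_eq_Icc]
  rw [show 2*(n+1) = 2*n+2 from by ring]
  have h1 : ((Nat.choose (2*n+2) (n+1) : ℕ) : ℝ) ≠ 0 :=
    Nat.cast_ne_zero.mpr (Nat.choose_pos (by omega)).ne'
  have h2 : ((n:ℝ)+1) ≠ 0 := by positivity
  push_cast
  field_simp
  ring

private lemma q_rel (n : ℕ) : (2*(n:ℝ)+3) * q (n+1) = (2*(n:ℝ)+2) * q n := by
  simp only [q]
  have c1 : ((Nat.choose (2*n+2) (n+1) : ℕ) : ℝ) = ((2*n+2)! : ℝ) / (((n+1)! : ℝ) * ((n+1)! : ℝ)) := by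
    rw [Nat.cast_choose ℝ (show n+1 ≤ 2*n+2 by omega),
      show 2*n+2-(n+1) = n+1 from by omega]
  have c2 : ((Nat.choose (2*(n+1)+2) (n+1+1) : ℕ) : ℝ)
      = ((2*n+4)! : ℝ) / (((n+2)! : ℝ) * ((n+2)! : ℝ)) := by
    rw [Nat.cast_choose ℝ (show n+1+1 ≤ 2*(n+1)+2 by omega)]
    rw [show 2*(n+1)+2 = 2*n+4 from by ring, show n+1+1 = n+2 from by ring,
      show 2*n+4-(n+2) = n+2 from by omega]
  have h1 : ((2*n+4)! : ℝ) = (2*(n:ℝ)+4)*(2*(n:ℝ)+3)*((2*n+2)! : ℝ) := by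
    rw [show 2*n+4 = 2*n+2+1+1 from by ring, fs, fs]; push_cast; ring
  have h2 : ((n+2)! : ℝ) = ((n:ℝ)+2)*((n:ℝ)+1)*(n ! : ℝ) := by
    rw [show n+2 = n+1+1 from by ring, fs, fs]; push_cast; ring
  have h3 : ((n+1)! : ℝ) = ((n:ℝ)+1)*(n ! : ℝ) := fs n
  have n1 : ((2*n+2)! : ℝ) ≠ 0 := Nat.cast_ne_zero.mpr (Nat.factorial_ne_zero _)
  have n2 : ((n ! : ℕ) : ℝ) ≠ 0 := Nat.cast_ne_zero.mpr (Nat.factorial_ne_zero _)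
  have n3 : ((n:ℝ)+1) ≠ 0 := by positivity
  have n4 : ((n:ℝ)+2) ≠ 0 := by positivity
  have n5 : (2*(n:ℝ)+3) ≠ 0 := by positivity
  rw [c2, c1, h1, h2, h3]
  push_cast
  rw [show 2*(n+1)+3 = 2*n+5 from by ring]
  field_simp
  ring

private lemma T_rec (n : ℕ) :
    (2*(n:ℝ)+3) * T (n+2) - (6*(n:ℝ)+8) * T (n+1) + (4*(n:ℝ)+4) * T n = 0 := by
  have h1 := T_step (n+1)
  have h2 := T_step n
  have h3 := q_rel n
  push_cast at h1
  linear_combination (2*(n:ℝ)+3) * h1 + (-2*(n:ℝ)-2) * h2 + h3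

private lemma S_eq_T : ∀ n, S n = T n := by
  have key : ∀ n, S n = T n ∧ S (n+1) = T (n+1) := by
    intro n
    induction n with
    | zero =>
      constructor
      · simp [S, T]
      · have hS : S 1 = 4 := by
          simp [S, Ap]
          norm_num [Nat.factorial]
        have hT : T 1 = 4 := by
          simp [T]
          norm_num
        rw [hS, hT]
    | succ n ih =>
      refine ⟨ih.2, ?_⟩
      have hs := S_rec n
      have ht := T_rec n
      have hne : (2*(n:ℝ)+3) ≠ 0 := by positivity
      have : (2*(n:ℝ)+3) * S (n+2) = (2*(n:ℝ)+3) * T (n+2) := by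
        rw [ih.1, ih.2] at hs
        linarith
      exact mul_left_cancel₀ hne this
  exact fun n => (key n).1

theorem bhalf_even_partial_sum (n : ℕ) :
    ∑ k ∈ Finset.range (2 * n + 1), bhalf (2 * n) (k : ℤ) =
      2 ^ n * (1 + (2 / π) * ∑ k ∈ Finset.Icc 1 n,
        (2 : ℝ) ^ k / ((k : ℝ) * (Nat.choose (2 * k) k : ℝ))) := by
  rw [sum_even_odd (fun k => bhalf (2*n) (k : ℤ)) n]
  have he : ∑ j ∈ Finset.range (n+1), bhalf (2*n) (((2*j : ℕ) : ℤ)) = 2^n := by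
    rw [Finset.sum_congr rfl (fun j hj =>
      bhalf_even_val n j (by have := Finset.mem_range.mp hj; omega))]
    rw [← Nat.cast_sum, Nat.sum_range_choose]
    push_cast; ring
  have ho : ∑ j ∈ Finset.range n, bhalf (2*n) (((2*j+1 : ℕ) : ℤ)) = S n / π := by
    have key : ∀ j ∈ Finset.range n,
        bhalf (2*n) (((2*j+1 : ℕ) : ℤ)) = Ap j (n-j) / π := by
      intro j hj
      have hjn : j < n := Finset.mem_range.mp hj
      have := bhalf_odd_val j (n-1-j)
      rw [show j+(n-1-j)+1 = n from by omega, show (n-1-j)+1 = n-j from by omega] at this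
      exact this
    rw [Finset.sum_congr rfl key, ← Finset.sum_div]
    rfl
  rw [he, ho, S_eq_T n]
  simp only [T]
  have hπ : (π : ℝ) ≠ 0 := Real.pi_ne_zero
  field_simp
  ring
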